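/- Let (E_i)_{i∈I} be a chain of polar subspaces of a polar space P, each with the property that every hyperbolic line (double perp of two non-collinear points) consists of exactly 2 points. Then the union ⋃ E_i also has the property that every hyperbolic line consists of exactly 2 points. -/
import Mathlib


/-- The perp of `X` inside `T` with respect to a collinearity relation `col`. -/
def perpIn {P : Type*} (col : P → P → Prop) (T X : Set P) : Set P :=
  {t ∈ T | ∀ x ∈ X, col t x}

/-- The hyperbolic line of `a, b` computed inside `T`: the double perp `{a,b}^{⊥_T ⊥_T}`. -/
def hypLine {P : Type*} (col : P → P → Prop) (T : Set P) (a b : P) : Set P :=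
  perpIn col T (perpIn col T {a, b})

/-- Containment lemma: a point of a subset `S ⊆ T` that lies on the hyperbolic line
computed in `T` also lies on the hyperbolic line computed in `S`. -/
lemma hypLine_inter_subset {P : Type*} (col : P → P → Prop) {S T : Set P}
    (hST : S ⊆ T) (a b : P) : hypLine col T a b ∩ S ⊆ hypLine col S a b := by
  rintro x ⟨⟨-, hx⟩, hxS⟩
  refine ⟨hxS, fun t ht => hx t ⟨hST ht.1, ht.2⟩⟩

/-- If every member of a chain `(E i)` of subspaces has all its hyperbolic lines of exactly
two points, then so does the union `⋃ E i`. -/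
theorem union_chain_hypLines_two_points
    {P ι : Type*} (col : P → P → Prop)
    (hcsymm : ∀ x y : P, col x y → col y x)
    (E : ι → Set P)
    (hchain : ∀ i j, E i ⊆ E j ∨ E j ⊆ E i)
    (h2 : ∀ i, ∀ a ∈ E i, ∀ b ∈ E i, ¬ col a b → hypLine col (E i) a b = {a, b}) :
    ∀ a ∈ ⋃ i, E i, ∀ b ∈ ⋃ i, E i, ¬ col a b →
      hypLine col (⋃ i, E i) a b = {a, b} := by
  rintro a ha b hb hab
  obtain ⟨i, hai⟩ := Set.mem_iUnion.1 ha
  obtain ⟨j, hbj⟩ := Set.mem_iUnion.1 hb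
  apply Set.Subset.antisymm
  · rintro x hx
    obtain ⟨k, hxk⟩ := Set.mem_iUnion.1 hx.1
    -- find an index m with a, b, x ∈ E m
    obtain ⟨m, ham, hbm, hxm⟩ : ∃ m, a ∈ E m ∧ b ∈ E m ∧ x ∈ E m := by
      rcases hchain i j with h1 | h1
      · rcases hchain j k with h2' | h2'
        · exact ⟨k, h2' (h1 hai), h2' hbj, hxk⟩
        · exact ⟨j, h1 hai, hbj, h2' hxk⟩
      · rcases hchain i k with h2' | h2'
        · exact ⟨k, h2' hai, h2' (h1 hbj), hxk⟩
        · exact ⟨i, hai, h1 hbj, h2' hxk⟩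
    have := hypLine_inter_subset col (Set.subset_iUnion E m) a b ⟨hx, hxm⟩
    rwa [h2 m a ham b hbm hab] at this
  · rintro x (rfl | rfl)
    · exact ⟨ha, fun t ht => hcsymm _ _ (ht.2 x (Or.inl rfl))⟩
    · exact ⟨hb, fun t ht => hcsymm _ _ (ht.2 x (Or.inr rfl))⟩
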